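/- 𝔰𝔭 = 𝔨 ⊕ 𝔥 as complex vector spaces; that is, 𝔨 ∩ 𝔥 = 0 and every X ∈ 𝔰𝔭 can be written (uniquely) as X = Y + Z with Y ∈ 𝔨 and Z ∈ 𝔥. -/

import Mathlib

/-!
Setup: `V` is the complex vector space with basis `{e_i, f_i}_{i ∈ ℕ}`,
realized as finitely supported functions on `ℕ ⊕ ℕ` (`Sum.inl i ↔ e_i`,
`Sum.inr i ↔ f_i`).  `ω` is the alternating form with `ω(e_i, f_j) = δ_{ij}`,
`ω(e_i,e_j) = ω(f_i,f_j) = 0`, and `ξ` is the functional with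
`ξ(e_i) = ξ(f_i) = 1`.  `MemSp X` says `X` lies in the Lie algebra `𝔰𝔭`,
`MemK X` that `X ∈ 𝔨` (sum of the upper-triangular Borels of the `𝔰𝔭₂`-blocks)
and `MemH X` that `X ∈ 𝔥` (the Lie algebra of the stabilizer of `ξ`).
-/

noncomputable section

/-- The complex vector space with basis `{e_i, f_i}_{i ∈ ℕ}`. -/
abbrev V : Type := (ℕ ⊕ ℕ) →₀ ℂ

/-- The basis vector `e_i`. -/
def e (i : ℕ) : V := Finsupp.single (Sum.inl i) 1

/-- The basis vector `f_i`. -/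
def f (i : ℕ) : V := Finsupp.single (Sum.inr i) 1

/-- The symplectic form `ω : ω(e_i, f_j) = δ_{ij}`, `ω(e_i,e_j) = ω(f_i,f_j) = 0`. -/
def omegaForm (v w : V) : ℂ :=
  ∑ᶠ i : ℕ, (v (Sum.inl i) * w (Sum.inr i) - v (Sum.inr i) * w (Sum.inl i))

/-- The functional `ξ` with `ξ(e_i) = ξ(f_i) = 1` for all `i`. -/
def xiFun (v : V) : ℂ := v.sum fun _ c => c

/-- Membership in `𝔰𝔭`: `X` kills all but finitely many basis vectors and is
ω-skew. -/
def MemSp (X : V →ₗ[ℂ] V) : Prop :=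
  {i : ℕ | X (e i) ≠ 0 ∨ X (f i) ≠ 0}.Finite ∧
    ∀ v w : V, omegaForm (X v) w + omegaForm v (X w) = 0

/-- Membership in `𝔨`: there are finitely supported sequences `(t_i)`, `(u_i)` with
`X(e_i) = t_i e_i` and `X(f_i) = u_i e_i − t_i f_i` for all `i`. -/
def MemK (X : V →ₗ[ℂ] V) : Prop :=
  MemSp X ∧ ∃ t u : ℕ → ℂ, {i : ℕ | t i ≠ 0}.Finite ∧ {i : ℕ | u i ≠ 0}.Finite ∧
    (∀ i : ℕ, X (e i) = t i • e i) ∧ (∀ i : ℕ, X (f i) = u i • e i - t i • f i)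

/-- Membership in `𝔥`: `ξ ∘ X = 0`. -/
def MemH (X : V →ₗ[ℂ] V) : Prop :=
  MemSp X ∧ ∀ v : V, xiFun (X v) = 0

/-! ### Auxiliary lemmas -/

lemma supp_fin (v w : V) :
    (Function.support fun i : ℕ =>
      v (Sum.inl i) * w (Sum.inr i) - v (Sum.inr i) * w (Sum.inl i)).Finite := by
  apply Set.Finite.subset
    (((v.support.finite_toSet.preimage Sum.inl_injective.injOn).union
      (v.support.finite_toSet.preimage Sum.inr_injective.injOn)))
  intro i hi
  simp only [Function.mem_support] at hi
  by_contra h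
  simp only [Set.mem_union, Set.mem_preimage, Finset.mem_coe, Finsupp.mem_support_iff,
    not_or, not_not] at h
  rw [h.1, h.2] at hi
  simp at hi

lemma omega_add_left (v v' w : V) :
    omegaForm (v + v') w = omegaForm v w + omegaForm v' w := by
  unfold omegaForm
  rw [← finsum_add_distrib (supp_fin v w) (supp_fin v' w)]
  apply finsum_congr; intro i
  simp only [Finsupp.add_apply]; ring

lemma omega_add_right (v w w' : V) :
    omegaForm v (w + w') = omegaForm v w + omegaForm v w' := by
  unfold omegaForm
  rw [← finsum_add_distrib (supp_fin v w) (supp_fin v w')]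
  apply finsum_congr; intro i
  simp only [Finsupp.add_apply]; ring

lemma omega_smul_left (c : ℂ) (v w : V) : omegaForm (c • v) w = c * omegaForm v w := by
  unfold omegaForm
  rw [mul_finsum]
  apply finsum_congr; intro i
  simp only [Finsupp.smul_apply, smul_eq_mul]; ring

lemma omega_smul_right (c : ℂ) (v w : V) : omegaForm v (c • w) = c * omegaForm v w := by
  unfold omegaForm
  rw [mul_finsum]
  apply finsum_congr; intro i
  simp only [Finsupp.smul_apply, smul_eq_mul]; ring

/-- `ω` as a bilinear map. -/
def Omega : V →ₗ[ℂ] V →ₗ[ℂ] ℂ :=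
  LinearMap.mk₂ ℂ omegaForm omega_add_left omega_smul_left omega_add_right omega_smul_right

lemma omega_eq (v w : V) : omegaForm v w = Omega v w := rfl

lemma omega_sub_left (v v' w : V) :
    omegaForm (v - v') w = omegaForm v w - omegaForm v' w := by
  simp only [omega_eq, map_sub, LinearMap.sub_apply]

lemma omega_sub_right (v w w' : V) :
    omegaForm v (w - w') = omegaForm v w - omegaForm v w' := by
  simp only [omega_eq, map_sub]

/-- `ξ` as a linear map. -/
def Xi : V →ₗ[ℂ] ℂ where
  toFun := xiFun
  map_add' v w := Finsupp.sum_add_index' (fun _ => rfl) (fun _ _ _ => rfl)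
  map_smul' c v := by
    simp only [RingHom.id_apply, smul_eq_mul]
    unfold xiFun
    rw [Finsupp.sum_smul_index (fun _ => rfl), Finsupp.mul_sum]

lemma xi_eq (v : V) : xiFun v = Xi v := rfl

lemma xi_single (a : ℕ ⊕ ℕ) (c : ℂ) : xiFun (Finsupp.single a c) = c :=
  Finsupp.sum_single_index rfl

lemma xi_e (i : ℕ) : xiFun (e i) = 1 := xi_single _ _
lemma xi_f (i : ℕ) : xiFun (f i) = 1 := xi_single _ _

lemma single_eq_smul (a : ℕ ⊕ ℕ) (c : ℂ) :
    (Finsupp.single a c : V) = c • Finsupp.single a 1 := by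
  rw [Finsupp.smul_single, smul_eq_mul, mul_one]

/-- basis values of ω -/
lemma omega_e_e (i j : ℕ) : omegaForm (e i) (e j) = 0 := by
  unfold omegaForm e
  rw [finsum_eq_zero_of_forall_eq_zero]
  intro k
  simp [Finsupp.single_apply]

lemma omega_f_f (i j : ℕ) : omegaForm (f i) (f j) = 0 := by
  unfold omegaForm f
  rw [finsum_eq_zero_of_forall_eq_zero]
  intro k
  simp [Finsupp.single_apply]

lemma omega_e_f (i j : ℕ) : omegaForm (e i) (f j) = if i = j then 1 else 0 := by
  unfold omegaForm e f
  rw [finsum_eq_single _ i]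
  · simp [Finsupp.single_apply, eq_comm]
  · intro k hk
    simp [Finsupp.single_apply, (Ne.symm hk)]

lemma omega_f_e (i j : ℕ) : omegaForm (f i) (e j) = -if i = j then 1 else 0 := by
  unfold omegaForm e f
  rw [finsum_eq_single _ i]
  · simp [Finsupp.single_apply, eq_comm]
  · intro k hk
    simp [Finsupp.single_apply, (Ne.symm hk)]

/-- Linear maps into a `ℂ`-module agreeing on `e i`, `f i` agree. -/
lemma lmap_ext {N : Type*} [AddCommMonoid N] [Module ℂ N] {φ ψ : V →ₗ[ℂ] N}
    (h1 : ∀ i, φ (e i) = ψ (e i)) (h2 : ∀ i, φ (f i) = ψ (f i)) : φ = ψ := by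
  apply Finsupp.lhom_ext
  intro a b
  rw [single_eq_smul, map_smul, map_smul]
  cases a with
  | inl i => rw [show (Finsupp.single (Sum.inl i) (1:ℂ) : V) = e i from rfl, h1 i]
  | inr i => rw [show (Finsupp.single (Sum.inr i) (1:ℂ) : V) = f i from rfl, h2 i]

/-- Skewness can be checked on basis vectors. -/
lemma skew_of_basis (X : V →ₗ[ℂ] V)
    (h : ∀ a b : ℕ ⊕ ℕ, omegaForm (X (Finsupp.single a 1)) (Finsupp.single b 1)
      + omegaForm (Finsupp.single a 1) (X (Finsupp.single b 1)) = 0) :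
    ∀ v w : V, omegaForm (X v) w + omegaForm v (X w) = 0 := by
  have hB : (Omega.comp X + Omega.compl₂ X : V →ₗ[ℂ] V →ₗ[ℂ] ℂ) = 0 := by
    apply Finsupp.lhom_ext
    intro a c
    apply LinearMap.ext
    intro w
    induction w using Finsupp.induction_linear with
    | zero => simp
    | add v w hv hw => rw [map_add, hv, hw]; simp
    | single b d =>
      have := h a b
      rw [single_eq_smul a c, single_eq_smul b d]
      simp only [LinearMap.add_apply, LinearMap.comp_apply, LinearMap.compl₂_apply,
        map_smul, LinearMap.smul_apply, LinearMap.zero_apply, omega_eq] at this ⊢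
      rw [this]
  intro v w
  have := LinearMap.congr_fun (LinearMap.congr_fun hB v) w
  simpa only [LinearMap.add_apply, LinearMap.comp_apply, LinearMap.compl₂_apply,
    LinearMap.zero_apply, omega_eq] using this

/-- `ξ ∘ X = 0` can be checked on basis vectors. -/
lemma xi_zero_of_basis (X : V →ₗ[ℂ] V)
    (h1 : ∀ i, xiFun (X (e i)) = 0) (h2 : ∀ i, xiFun (X (f i)) = 0) :
    ∀ v : V, xiFun (X v) = 0 := by
  have : Xi.comp X = 0 := by
    apply lmap_ext
    · intro i; simpa only [LinearMap.comp_apply, LinearMap.zero_apply, xi_eq] using h1 i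
    · intro i; simpa only [LinearMap.comp_apply, LinearMap.zero_apply, xi_eq] using h2 i
  intro v
  simpa only [LinearMap.comp_apply, LinearMap.zero_apply, xi_eq] using
    LinearMap.congr_fun this v

/-- `𝔰𝔭 = 𝔨 ⊕ 𝔥`: the intersection of `𝔨` and `𝔥` is zero, and every element of
`𝔰𝔭` is a sum of an element of `𝔨` and an element of `𝔥`. -/
theorem sp_eq_k_oplus_h :
    (∀ X : V →ₗ[ℂ] V, MemK X → MemH X → X = 0) ∧
    (∀ X : V →ₗ[ℂ] V, MemSp X → ∃ Y Z : V →ₗ[ℂ] V, MemK Y ∧ MemH Z ∧ X = Y + Z) := by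
  constructor
  · rintro X ⟨-, t, u, -, -, he, hf⟩ ⟨-, hxi⟩
    have ht : ∀ i, t i = 0 := by
      intro i
      have := hxi (e i)
      rw [he i, xi_eq, map_smul, ← xi_eq, xi_e] at this
      simpa using this
    have hu : ∀ i, u i = 0 := by
      intro i
      have := hxi (f i)
      rw [hf i, xi_eq, map_sub, map_smul, map_smul, ← xi_eq] at this
      simp only [xi_eq, ← xi_eq, xi_e, xi_f, smul_eq_mul, mul_one, ht i, sub_zero] at this
      simpa using this
    apply lmap_ext
    · intro i; rw [he i, ht i]; simp
    · intro i; rw [hf i, ht i, hu i]; simp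
  · rintro X ⟨hfin, hskew⟩
    set t : ℕ → ℂ := fun i => xiFun (X (e i)) with htdef
    set u : ℕ → ℂ := fun i => xiFun (X (f i)) + xiFun (X (e i)) with hudef
    set g : ℕ ⊕ ℕ → V := Sum.elim (fun i => t i • e i) (fun i => u i • e i - t i • f i)
      with hgdef
    set Y : V →ₗ[ℂ] V := Finsupp.linearCombination ℂ g with hYdef
    have hYe : ∀ i, Y (e i) = t i • e i := by
      intro i
      rw [hYdef, show e i = Finsupp.single (Sum.inl i) 1 from rfl,
        Finsupp.linearCombination_single, one_smul, hgdef]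
      rfl
    have hYf : ∀ i, Y (f i) = u i • e i - t i • f i := by
      intro i
      rw [hYdef, show f i = Finsupp.single (Sum.inr i) 1 from rfl,
        Finsupp.linearCombination_single, one_smul, hgdef]
      rfl
    have ht0 : ∀ i, X (e i) = 0 → t i = 0 := by
      intro i h; simp [htdef, h, xiFun]
    have hu0 : ∀ i, X (e i) = 0 → X (f i) = 0 → u i = 0 := by
      intro i h h'; simp [hudef, h, h', xiFun]
    -- Y is skew
    have hYskew : ∀ v w : V, omegaForm (Y v) w + omegaForm v (Y w) = 0 := by
      apply skew_of_basis
      intro a b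
      cases a with
      | inl i =>
        cases b with
        | inl j =>
          rw [show (Finsupp.single (Sum.inl i) (1:ℂ) : V) = e i from rfl,
            show (Finsupp.single (Sum.inl j) (1:ℂ) : V) = e j from rfl, hYe i, hYe j]
          simp only [omega_smul_left, omega_smul_right, omega_e_e]
          ring
        | inr j =>
          rw [show (Finsupp.single (Sum.inl i) (1:ℂ) : V) = e i from rfl,
            show (Finsupp.single (Sum.inr j) (1:ℂ) : V) = f j from rfl, hYe i, hYf j]
          simp only [omega_smul_left, omega_sub_right, omega_smul_right,
            omega_e_f, omega_e_e]
          by_cases h : i = j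
          · subst h; simp
          · simp [h]
      | inr i =>
        cases b with
        | inl j =>
          rw [show (Finsupp.single (Sum.inr i) (1:ℂ) : V) = f i from rfl,
            show (Finsupp.single (Sum.inl j) (1:ℂ) : V) = e j from rfl, hYf i, hYe j]
          simp only [omega_sub_left, omega_smul_left, omega_smul_right,
            omega_e_e, omega_f_e]
          by_cases h : i = j
          · subst h; simp
          · simp [h, Ne.symm h]
        | inr j =>
          rw [show (Finsupp.single (Sum.inr i) (1:ℂ) : V) = f i from rfl,
            show (Finsupp.single (Sum.inr j) (1:ℂ) : V) = f j from rfl, hYf i, hYf j]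
          simp only [omega_sub_left, omega_sub_right, omega_smul_left,
            omega_smul_right, omega_e_f, omega_f_f, omega_f_e]
          by_cases h : i = j
          · subst h; simp
          · simp [h, Ne.symm h]
    -- finiteness for Y
    have hYfin : {i : ℕ | Y (e i) ≠ 0 ∨ Y (f i) ≠ 0}.Finite := by
      apply hfin.subset
      intro i hi
      by_contra h
      simp only [Set.mem_setOf_eq, not_or, not_not] at h
      have h1 := ht0 i h.1
      have h2 := hu0 i h.1 h.2
      simp only [Set.mem_setOf_eq, hYe i, hYf i, h1, h2, zero_smul, sub_zero, ne_eq,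
        not_true_eq_false, or_self] at hi
    have hYsp : MemSp Y := ⟨hYfin, hYskew⟩
    have hYK : MemK Y := by
      refine ⟨hYsp, t, u, ?_, ?_, hYe, hYf⟩
      · apply hfin.subset
        intro i hi
        simp only [Set.mem_setOf_eq] at hi ⊢
        by_contra h
        simp only [not_or, not_not] at h
        exact hi (ht0 i h.1)
      · apply hfin.subset
        intro i hi
        simp only [Set.mem_setOf_eq] at hi ⊢
        by_contra h
        simp only [not_or, not_not] at h
        exact hi (hu0 i h.1 h.2)
    -- Z
    set Z : V →ₗ[ℂ] V := X - Y with hZdef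
    have hZfin : {i : ℕ | Z (e i) ≠ 0 ∨ Z (f i) ≠ 0}.Finite := by
      apply (hfin.union hYfin).subset
      intro i hi
      by_contra h
      simp only [Set.mem_union, Set.mem_setOf_eq, not_or, not_not] at h
      obtain ⟨⟨a1, a2⟩, ⟨b1, b2⟩⟩ := h
      simp only [Set.mem_setOf_eq, hZdef, LinearMap.sub_apply, a1, a2, b1, b2, sub_zero,
        ne_eq, not_true_eq_false, or_self, sub_self] at hi
    have hZskew : ∀ v w : V, omegaForm (Z v) w + omegaForm v (Z w) = 0 := by
      intro v w
      have h1 := hskew v w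
      have h2 := hYskew v w
      simp only [hZdef, LinearMap.sub_apply, omega_sub_left, omega_sub_right]
      linear_combination h1 - h2
    have hZxi : ∀ v : V, xiFun (Z v) = 0 := by
      apply xi_zero_of_basis
      · intro i
        simp only [hZdef, LinearMap.sub_apply, hYe i, xi_eq, map_sub, map_smul]
        rw [← xi_eq, ← xi_eq, xi_e]
        simp [htdef, smul_eq_mul, mul_one]
      · intro i
        simp only [hZdef, LinearMap.sub_apply, hYf i, xi_eq, map_sub, map_smul]
        rw [← xi_eq, ← xi_eq]
        simp only [xi_eq, map_sub, map_smul, ← xi_eq, xi_e, xi_f, smul_eq_mul, mul_one]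
        simp [hudef, htdef]
    refine ⟨Y, Z, hYK, ⟨⟨hZfin, hZskew⟩, hZxi⟩, ?_⟩
    rw [hZdef]; abel

end
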